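/- Let σ > 0 and let q(r) = (2/√(2π))·∫_{r/σ}^{3r/σ} e^{-t²/2} dt, p(r) = (2/√(2π))·∫_0^{r/σ} e^{-t²/2} dt, and λ(r) = (2/√(2π))·∫_{3r/σ}^{∞} e^{-t²/2} dt. Then there is no r > 0 and no value w ∈ (0,1] such that simultaneously p(r) ≥ w/8, λ(r) ≥ w/8, and q(r) < w/160. -/

import Mathlib

open Real MeasureTheory intervalIntegral

/-- Mass of the central interval `[-r, r]` for `N(0,σ²)`. -/
noncomputable def pMass (σ r : ℝ) : ℝ :=
  (2 / Real.sqrt (2 * π)) * ∫ t in (0 : ℝ)..(r / σ), Real.exp (-t ^ 2 / 2)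

/-- Mass of the annulus `r ≤ |t| ≤ 3r` for `N(0,σ²)`. -/
noncomputable def qMass (σ r : ℝ) : ℝ :=
  (2 / Real.sqrt (2 * π)) * ∫ t in (r / σ)..(3 * r / σ), Real.exp (-t ^ 2 / 2)

/-- Mass of the tails `|t| ≥ 3r` for `N(0,σ²)`. -/
noncomputable def lamMass (σ r : ℝ) : ℝ :=
  (2 / Real.sqrt (2 * π)) * ∫ t in Set.Ioi (3 * r / σ), Real.exp (-t ^ 2 / 2)


lemma exp_sq_eq (t : ℝ) : Real.exp (-t ^ 2 / 2) = Real.exp (-(1/2 : ℝ) * t ^ 2) := by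
  ring_nf

lemma integrableOn_exp_tail (a : ℝ) :
    IntegrableOn (fun t : ℝ => Real.exp (-t ^ 2 / 2)) (Set.Ioi a) := by
  have := (integrable_exp_neg_mul_sq (by norm_num : (0:ℝ) < 1/2)).integrableOn
            (s := Set.Ioi a)
  refine this.congr_fun (fun t _ => ?_) measurableSet_Ioi
  ring_nf

lemma integrableOn_mul_exp_tail (a : ℝ) :
    IntegrableOn (fun t : ℝ => t * Real.exp (-t ^ 2 / 2)) (Set.Ioi a) := by
  have := (integrable_mul_exp_neg_mul_sq (by norm_num : (0:ℝ) < 1/2)).integrableOn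
            (s := Set.Ioi a)
  refine this.congr_fun (fun t _ => ?_) measurableSet_Ioi
  ring_nf

lemma tail_mul_integral (a : ℝ) :
    ∫ t in Set.Ioi a, t * Real.exp (-t ^ 2 / 2) = Real.exp (-a ^ 2 / 2) := by
  have h : ∫ t in Set.Ioi a, t * Real.exp (-t ^ 2 / 2)
      = 0 - (fun t : ℝ => -Real.exp (-t ^ 2 / 2)) a := by
    apply integral_Ioi_of_hasDerivAt_of_tendsto
    · exact (Continuous.rexp ((continuous_pow 2).neg.div_const 2)).neg.continuousWithinAt
    · intro x _
      have h1 : HasDerivAt (fun t : ℝ => -t ^ 2 / 2) (-x) x := by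
        have h := ((hasDerivAt_pow 2 x).neg).div_const 2
        norm_num at h
        rw [show -x = -(2 * x) / 2 by ring]
        exact h
      have h2 := (h1.exp).neg
      convert h2 using 1
      · ext t; simp
      · ring
    · exact integrableOn_mul_exp_tail a
    · have : Filter.Tendsto (fun t : ℝ => Real.exp (-t ^ 2 / 2)) Filter.atTop (nhds 0) := by
        have h2 : Filter.Tendsto (fun t : ℝ => -t ^ 2 / 2) Filter.atTop Filter.atBot := by
          apply Filter.Tendsto.atBot_div_const (by norm_num)
          exact Filter.tendsto_neg_atTop_atBot.comp (Filter.tendsto_pow_atTop (by norm_num : (2:ℕ) ≠ 0))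
        exact Real.tendsto_exp_atBot.comp h2
      simpa using this.neg
  simpa using h

lemma tail_le (a : ℝ) (ha : 0 < a) :
    ∫ t in Set.Ioi a, Real.exp (-t ^ 2 / 2) ≤ Real.exp (-a ^ 2 / 2) / a := by
  have hmono : ∫ t in Set.Ioi a, Real.exp (-t ^ 2 / 2)
      ≤ ∫ t in Set.Ioi a, (t / a) * Real.exp (-t ^ 2 / 2) := by
    apply setIntegral_mono_on (integrableOn_exp_tail a)
    · have hdiv : IntegrableOn (fun t : ℝ => t * Real.exp (-t ^ 2 / 2) / a) (Set.Ioi a) :=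
        (integrableOn_mul_exp_tail a).div_const a
      exact hdiv.congr_fun (fun t _ => by ring) measurableSet_Ioi
    · exact measurableSet_Ioi
    · intro t ht
      have h1 : (1 : ℝ) ≤ t / a := (one_le_div ha).2 (le_of_lt ht)
      nlinarith [Real.exp_pos (-t ^ 2 / 2)]
  calc ∫ t in Set.Ioi a, Real.exp (-t ^ 2 / 2)
      ≤ ∫ t in Set.Ioi a, (t / a) * Real.exp (-t ^ 2 / 2) := hmono
    _ = (∫ t in Set.Ioi a, t * Real.exp (-t ^ 2 / 2)) / a := by
        rw [← MeasureTheory.integral_div]; congr 1; funext t; ring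
    _ = Real.exp (-a ^ 2 / 2) / a := by rw [tail_mul_integral]

set_option maxHeartbeats 1000000 in
lemma key_ineq (x w : ℝ) (hx : 0 < x) (hw : 0 < w)
    (hp : w / 8 ≤ (2 / Real.sqrt (2 * π)) * ∫ t in (0:ℝ)..x, Real.exp (-t ^ 2 / 2))
    (hl : w / 8 ≤ (2 / Real.sqrt (2 * π)) * ∫ t in Set.Ioi (3 * x), Real.exp (-t ^ 2 / 2)) :
    w / 160 ≤ (2 / Real.sqrt (2 * π)) * ∫ t in x..(3 * x), Real.exp (-t ^ 2 / 2) := by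
  have hc : 0 < 2 / Real.sqrt (2 * π) := by
    apply div_pos two_pos
    exact Real.sqrt_pos.2 (by positivity)
  generalize hcdef : 2 / Real.sqrt (2 * π) = c at *
  have hcont : Continuous (fun t : ℝ => Real.exp (-t ^ 2 / 2)) :=
    (Continuous.rexp ((continuous_pow 2).neg.div_const 2))
  have hE : 0 < Real.exp (-(3 * x) ^ 2 / 2) := Real.exp_pos _
  -- lower bound for the annulus integral
  have hqlow : 2 * x * Real.exp (-(3 * x) ^ 2 / 2) ≤ ∫ t in x..(3 * x), Real.exp (-t ^ 2 / 2) := by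
    have hmono : ∫ t in x..(3 * x), Real.exp (-(3 * x) ^ 2 / 2)
        ≤ ∫ t in x..(3 * x), Real.exp (-t ^ 2 / 2) := by
      apply intervalIntegral.integral_mono_on (by linarith)
        intervalIntegrable_const (hcont.intervalIntegrable _ _)
      intro t ht
      apply Real.exp_le_exp.2
      have ht1 := ht.1; have ht2 := ht.2
      nlinarith
    calc 2 * x * Real.exp (-(3 * x) ^ 2 / 2)
        = ∫ t in x..(3 * x), Real.exp (-(3 * x) ^ 2 / 2) := by
          rw [intervalIntegral.integral_const]; simp [smul_eq_mul]; ring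
      _ ≤ _ := hmono
  have hqtot : c * (2 * x * Real.exp (-(3 * x) ^ 2 / 2))
      ≤ c * ∫ t in x..(3 * x), Real.exp (-t ^ 2 / 2) :=
    mul_le_mul_of_nonneg_left hqlow hc.le
  rcases le_or_gt x (1/2) with hhalf | hhalf
  · -- small x: use the central mass
    have hpup : ∫ t in (0:ℝ)..x, Real.exp (-t ^ 2 / 2) ≤ x := by
      have hmono : ∫ t in (0:ℝ)..x, Real.exp (-t ^ 2 / 2) ≤ ∫ t in (0:ℝ)..x, (1:ℝ) := by
        apply intervalIntegral.integral_mono_on hx.le (hcont.intervalIntegrable _ _)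
          intervalIntegrable_const
        intro t ht
        have h2 : -t ^ 2 / 2 ≤ 0 := by nlinarith [sq_nonneg t]
        simpa using Real.exp_le_one_iff.2 h2
      simpa using hmono
    have hcx : w / 8 ≤ c * x :=
      le_trans hp (mul_le_mul_of_nonneg_left hpup hc.le)
    have hEl : Real.exp (-(9/8:ℝ)) ≤ Real.exp (-(3 * x) ^ 2 / 2) := by
      apply Real.exp_le_exp.2; nlinarith
    have h40 : (1:ℝ)/40 < Real.exp (-(9/8:ℝ)) := by
      rw [Real.exp_neg]
      have h1 : Real.exp ((9:ℝ)/8) < Real.exp 2 := Real.exp_lt_exp.2 (by norm_num)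
      have h2 : Real.exp 2 < 40 := by
        have h3 : Real.exp 1 * Real.exp 1 = Real.exp 2 := by
          rw [← Real.exp_add]; norm_num
        nlinarith [Real.exp_one_lt_d9, Real.exp_pos 1]
      rw [lt_inv_comm₀ (by norm_num) (Real.exp_pos _)]
      · linarith
    calc w / 160 ≤ (1/40) * (2 * (w/8)) := by linarith
      _ ≤ Real.exp (-(9/8:ℝ)) * (2 * (c * x)) := by
          apply mul_le_mul h40.le (by linarith) (by linarith) (Real.exp_pos _).le
      _ ≤ Real.exp (-(3*x)^2/2) * (2 * (c * x)) := by
          apply mul_le_mul_of_nonneg_right hEl; positivity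
      _ = c * (2 * x * Real.exp (-(3 * x) ^ 2 / 2)) := by ring
      _ ≤ _ := hqtot
  · -- large x: use the tail mass
    have hkey : w / 8 ≤ c * (Real.exp (-(3 * x) ^ 2 / 2) / (3 * x)) :=
      le_trans hl (mul_le_mul_of_nonneg_left (tail_le (3 * x) (by linarith)) hc.le)
    calc w / 160 ≤ (3/2) * (w/8) := by linarith
      _ ≤ 6 * x ^ 2 * (c * (Real.exp (-(3 * x) ^ 2 / 2) / (3 * x))) := by
          apply mul_le_mul (by nlinarith) hkey (by linarith) (by nlinarith)
      _ = c * (2 * x * Real.exp (-(3 * x) ^ 2 / 2)) := by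
          field_simp; ring
      _ ≤ _ := hqtot

theorem no_terrific_configuration (σ : ℝ) (hσ : 0 < σ) :
    ¬ ∃ (r w : ℝ), 0 < r ∧ 0 < w ∧ w ≤ 1 ∧
      w / 8 ≤ pMass σ r ∧ w / 8 ≤ lamMass σ r ∧ qMass σ r < w / 160 := by
  rintro ⟨r, w, hr, hw, hw1, hp, hl, hq⟩
  have hx : 0 < r / σ := div_pos hr hσ
  have h3x : (3 : ℝ) * r / σ = 3 * (r / σ) := by ring
  unfold pMass at hp
  unfold lamMass at hl
  unfold qMass at hq
  rw [h3x] at hl hq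
  exact absurd (key_ineq (r / σ) w hx hw hp hl) (not_le.2 hq)
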